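/- Let T be a 2-isometry, u,v nonzero with ‖v‖=1, K = u⊗v, T̃ = T + K. For x ∈ v^⊥ with α := ⟨Tx, v⟩ ≠ 0, write Tx = u₁ + αv with u₁ ∈ v^⊥ and set β := ⟨Tu₁, u⟩/‖u‖². Then ⟨Δ₂(T̃)x, x⟩ = |α|² ( 2 Re( (conj β / conj α)‖u‖² + ⟨u, Tv⟩ ) + ‖u‖² ). -/

import Mathlib

open ContinuousLinearMap

variable {H : Type*} [NormedAddCommGroup H] [InnerProductSpace ℂ H] [CompleteSpace H]

/-- The rank-one operator `u ⊗ v`, defined by `(u ⊗ v) h = ⟨h, v⟩ u`. -/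
noncomputable def rankOne (u v : H) : H →L[ℂ] H := (innerSL ℂ v).smulRight u

/-- `Δ₂(T) = I - 2 T*T + T*²T²`. -/
noncomputable def Delta2 (T : H →L[ℂ] H) : H →L[ℂ] H :=
  1 - 2 • (ContinuousLinearMap.adjoint T ∘L T)
    + ContinuousLinearMap.adjoint (T ∘L T) ∘L (T ∘L T)

theorem stmt_9 (T : H →L[ℂ] H) (hT : Delta2 T = 0) (u v : H) (hu : u ≠ 0) (hv : v ≠ 0)
    (hv1 : ‖v‖ = 1) (K : H →L[ℂ] H) (hK : K = rankOne u v)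
    (x : H) (hx : (inner ℂ v x : ℂ) = 0)
    (α : ℂ) (hα : α = (inner ℂ v (T x) : ℂ)) (hα0 : α ≠ 0)
    (u₁ : H) (hu₁ : T x = u₁ + α • v) (hu₁mem : (inner ℂ v u₁ : ℂ) = 0)
    (β : ℂ) (hβ : β = (inner ℂ u (T u₁) : ℂ) / (‖u‖ ^ 2 : ℂ)) :
    (inner ℂ (Delta2 (T + K) x) x : ℂ) =
      ((‖α‖ ^ 2 *
        (2 * ((starRingEnd ℂ β / starRingEnd ℂ α) * (‖u‖ ^ 2 : ℂ)
              + (inner ℂ (T v) u : ℂ)).re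
          + ‖u‖ ^ 2) : ℝ) : ℂ) := by
  have expand : ∀ (S : H →L[ℂ] H) (y : H),
      (inner ℂ (Delta2 S y) y : ℂ)
        = inner ℂ y y - 2 * inner ℂ (S y) (S y) + inner ℂ (S (S y)) (S (S y)) := by
    intro S y
    simp [Delta2, sub_apply, add_apply, smul_apply, comp_apply, inner_sub_left, inner_add_left,
      inner_smul_left, adjoint_inner_left, two_smul]
    ring
  have h1 : (T + K) x = T x := by
    simp [add_apply, hK, rankOne, hx]
  have h2 : (T + K) ((T + K) x) = T (T x) + α • u := by
    rw [h1]
    simp [add_apply, hK, rankOne, ← hα]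
  have hT0 : (inner ℂ x x : ℂ) - 2 * inner ℂ (T x) (T x) + inner ℂ (T (T x)) (T (T x)) = 0 := by
    rw [← expand T x, hT]; simp
  have hu2 : ((‖u‖ : ℂ) ^ 2) ≠ 0 := by
    simpa using pow_ne_zero 2 (Complex.ofReal_ne_zero.mpr (norm_ne_zero_iff.mpr hu))
  have hβu : (inner ℂ u (T u₁) : ℂ) = β * (‖u‖ ^ 2 : ℂ) := by
    rw [hβ, div_mul_cancel₀ _ hu2]
  have hTTx : T (T x) = T u₁ + α • T v := by
    rw [hu₁]; simp
  have hinn : (inner ℂ (T (T x)) u : ℂ)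
      = starRingEnd ℂ β * (‖u‖ ^ 2 : ℂ) + starRingEnd ℂ α * inner ℂ (T v) u := by
    rw [hTTx, inner_add_left, inner_smul_left, ← inner_conj_symm (T u₁) u, hβu]
    simp [map_mul]
  set t : ℂ := inner ℂ (T v) u with ht
  set G : ℂ := starRingEnd ℂ β * (‖u‖ ^ 2 : ℂ) + starRingEnd ℂ α * t with hG
  have hexp : (inner ℂ (T (T x) + α • u) (T (T x) + α • u) : ℂ)
      = inner ℂ (T (T x)) (T (T x)) + starRingEnd ℂ α * starRingEnd ℂ G + α * G
        + α * starRingEnd ℂ α * (‖u‖ ^ 2 : ℂ) := by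
    have huu : (inner ℂ u u : ℂ) = ((‖u‖ : ℂ) ^ 2) := by
      rw [inner_self_eq_norm_sq_to_K]; norm_cast
    simp only [inner_add_left, inner_add_right, inner_smul_left, inner_smul_right, hinn,
      ← inner_conj_symm u (T (T x)), ← hG, huu]
    push_cast
    ring
  rw [expand, h2, h1, hexp]
  have hα0' : starRingEnd ℂ α ≠ 0 := by
    intro h; apply hα0; simpa using congrArg (starRingEnd ℂ) h
  have key : starRingEnd ℂ α * starRingEnd ℂ G + α * G
      + α * starRingEnd ℂ α * (‖u‖ ^ 2 : ℂ)
      = ((‖α‖ ^ 2 * (2 * ((starRingEnd ℂ β / starRingEnd ℂ α) * (‖u‖ ^ 2 : ℂ) + t).re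
          + ‖u‖ ^ 2) : ℝ) : ℂ) := by
    have hre : ∀ w : ℂ, ((2 * w.re : ℝ) : ℂ) = w + starRingEnd ℂ w := fun w => by
      push_cast; rw [Complex.add_conj]; push_cast; ring
    set w : ℂ := starRingEnd ℂ β / starRingEnd ℂ α * (‖u‖ ^ 2 : ℂ) + t with hwd
    rw [Complex.ofReal_mul, Complex.ofReal_add, hre w, Complex.ofReal_pow,
      ← Complex.mul_conj' α, Complex.ofReal_pow]
    simp only [hwd, hG, map_add, map_mul, map_div₀, Complex.conj_conj, Complex.conj_ofReal]
    field_simp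
    ring
  rw [← key]
  linear_combination hT0
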